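/- Let n ≥ 2, set c := −q^{−1}, and let a ∈ K be invertible and u ∈ K satisfy u·a ≠ 1, u·a ≠ −ρq, u ≠ a, and u + ρqa ≠ 0. In B_{d,n} set Q_{n−1}(a,u;c) := T_{n−1} + ((q − q^{−1})/(ρ^{−1}cua − 1))·1 + ((q − q^{−1})/(1 + qcua))·E_{n−1} and T_{n−1}(u,a) := T_{n−1} + ((q − q^{−1})u/(a − u))·1 + ((q − q^{−1})u/(u + ρqa))·E_{n−1}. Then for every element y ∈ B_{d,n} satisfying y X_{n−1} = a·y, one has y (u − X_n) Q_{n−1}(a,u;c) (cu X_{n−1} − ρ) = y (cu X_n − ρ) T_{n−1}(u,a) (u − X_{n−1}). -/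

import Mathlib

open scoped BigOperators

/-- The cyclotomic Birman–Murakami–Wenzl algebra data: elements of a `K`-algebra `A`
satisfying the defining relations of `B_{d,n}`. -/
structure CBMW (K : Type*) [Field K] (A : Type*) [Ring A] [Algebra K A]
    (d n : ℕ) (δ : ℕ → K) (ρ q : K) (v : Fin d → K) where
  T : ℕ → A
  Tinv : ℕ → A
  X₁ : A
  X₁inv : A
  E : ℕ → A
  rho_ne : ρ ≠ 0
  q_ne : q ≠ 0
  qq_ne : q - q⁻¹ ≠ 0
  v_ne : ∀ i, v i ≠ 0
  param : ρ - ρ⁻¹ = (q - q⁻¹) * (δ 0 - 1)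
  TTinv : ∀ i, 1 ≤ i → i ≤ n - 1 → T i * Tinv i = 1
  TinvT : ∀ i, 1 ≤ i → i ≤ n - 1 → Tinv i * T i = 1
  XXinv : X₁ * X₁inv = 1
  XinvX : X₁inv * X₁ = 1
  Esq : ∀ i, 1 ≤ i → i ≤ n - 1 → E i * E i = δ 0 • E i
  braid : ∀ i, 1 ≤ i → i + 1 ≤ n - 1 → T i * T (i + 1) * T i = T (i + 1) * T i * T (i + 1)
  Tcomm : ∀ i j, 1 ≤ i → j ≤ n - 1 → i + 2 ≤ j → T i * T j = T j * T i
  XTXT : 1 ≤ n - 1 → X₁ * T 1 * X₁ * T 1 = T 1 * X₁ * T 1 * X₁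
  XTcomm : ∀ j, 2 ≤ j → j ≤ n - 1 → X₁ * T j = T j * X₁
  EEEup : ∀ i, 1 ≤ i → i + 1 ≤ n - 1 → E i * E (i + 1) * E i = E i
  EEEdown : ∀ i, 1 ≤ i → i + 1 ≤ n - 1 → E (i + 1) * E i * E (i + 1) = E (i + 1)
  TTEup : ∀ i, 1 ≤ i → i + 1 ≤ n - 1 → T i * T (i + 1) * E i = E (i + 1) * E i
  TTEdown : ∀ i, 1 ≤ i → i + 1 ≤ n - 1 → T (i + 1) * T i * E (i + 1) = E i * E (i + 1)
  ETTup : ∀ i, 1 ≤ i → i + 1 ≤ n - 1 → E i * T (i + 1) * T i = E i * E (i + 1)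
  ETTdown : ∀ i, 1 ≤ i → i + 1 ≤ n - 1 → E (i + 1) * T i * T (i + 1) = E (i + 1) * E i
  EXE : ∀ j, 1 ≤ j → j ≤ d - 1 → E 1 * X₁ ^ j * E 1 = δ j • E 1
  skein : ∀ i, 1 ≤ i → i ≤ n - 1 → T i - Tinv i = (q - q⁻¹) • (1 - E i)
  TE : ∀ i, 1 ≤ i → i ≤ n - 1 → T i * E i = ρ⁻¹ • E i
  ET : ∀ i, 1 ≤ i → i ≤ n - 1 → E i * T i = ρ⁻¹ • E i
  unwrapl : 1 ≤ n - 1 → E 1 * X₁ * T 1 * X₁ = ρ • E 1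
  unwrapr : 1 ≤ n - 1 → X₁ * T 1 * X₁ * E 1 = ρ • E 1
  cyclo : (List.ofFn fun i : Fin d => X₁ - algebraMap K A (v i)).prod = 0

variable {K : Type*} [Field K] {A : Type*} [Ring A] [Algebra K A]
  {d n : ℕ} {δ : ℕ → K} {ρ q : K} {v : Fin d → K}

/-- The Jucys–Murphy elements `X_1, X_2, …` of the cyclotomic BMW algebra,
defined by `X_{i+1} = T_i X_i T_i` (with the convention `X 0 = 1`). -/
def CBMW.X (B : CBMW K A d n δ ρ q v) : ℕ → A
  | 0 => 1
  | 1 => B.X₁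
  | k + 2 => B.T (k + 1) * CBMW.X B (k + 1) * B.T (k + 1)

namespace CBMW

variable (B : CBMW K A d n δ ρ q v)

lemma X_succ' (i : ℕ) (hi : 1 ≤ i) : B.X (i + 1) = B.T i * B.X i * B.T i := by
  cases i with
  | zero => omega
  | succ k => rfl

lemma X_comm_T : ∀ i, 1 ≤ i → ∀ j, i + 1 ≤ j → j ≤ n - 1 →
    B.X i * B.T j = B.T j * B.X i := by
  intro i hi
  induction i, hi using Nat.le_induction with
  | base =>
    intro j hj hj2
    exact B.XTcomm j hj hj2
  | succ i hi ih =>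
    intro j hj hj2
    have h1 : B.T i * B.T j = B.T j * B.T i := B.Tcomm i j hi hj2 (by omega)
    have h2 : B.X i * B.T j = B.T j * B.X i := ih j (by omega) hj2
    rw [B.X_succ' i hi]
    calc B.T i * B.X i * B.T i * B.T j
        = B.T i * B.X i * (B.T i * B.T j) := by rw [mul_assoc]
      _ = B.T i * B.X i * (B.T j * B.T i) := by rw [h1]
      _ = B.T i * (B.X i * B.T j) * B.T i := by simp only [mul_assoc]
      _ = B.T i * (B.T j * B.X i) * B.T i := by rw [h2]
      _ = B.T i * B.T j * (B.X i * B.T i) := by simp only [mul_assoc]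
      _ = B.T j * B.T i * (B.X i * B.T i) := by rw [h1]
      _ = B.T j * (B.T i * B.X i * B.T i) := by simp only [mul_assoc]

lemma X_braid : ∀ i, 1 ≤ i → i ≤ n - 1 →
    B.X i * B.T i * B.X i * B.T i = B.T i * B.X i * B.T i * B.X i := by
  intro i hi
  induction i, hi using Nat.le_induction with
  | base => exact fun h => B.XTXT h
  | succ i hi ih =>
    intro hle
    have hin : i ≤ n - 1 := by omega
    have IH := ih hin
    set S := B.T i with hSdef
    set R := B.T (i + 1) with hRdef
    set x := B.X i with hxdef
    have hbraid : S * R * S = R * S * R := B.braid i hi hle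
    have hcomm : x * R = R * x := B.X_comm_T i hi (i + 1) (by omega) hle
    have hbr : ∀ z : A, S * (R * (S * z)) = R * (S * (R * z)) := by
      intro z
      calc S * (R * (S * z)) = S * R * S * z := by simp only [mul_assoc]
        _ = R * S * R * z := by rw [hbraid]
        _ = R * (S * (R * z)) := by simp only [mul_assoc]
    have hbr' : ∀ z : A, R * (S * (R * z)) = S * (R * (S * z)) := fun z => (hbr z).symm
    have hcm : ∀ z : A, x * (R * z) = R * (x * z) := by
      intro z
      calc x * (R * z) = x * R * z := by rw [mul_assoc]
        _ = R * x * z := by rw [hcomm]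
        _ = R * (x * z) := by rw [mul_assoc]
    have hIH : ∀ z : A, x * (S * (x * (S * z))) = S * (x * (S * (x * z))) := by
      intro z
      calc x * (S * (x * (S * z))) = x * S * x * S * z := by simp only [mul_assoc]
        _ = S * x * S * x * z := by rw [IH]
        _ = S * (x * (S * (x * z))) := by simp only [mul_assoc]
    have hbrE : R * (S * R) = S * (R * S) := by
      calc R * (S * R) = R * S * R := by rw [mul_assoc]
        _ = S * R * S := hbraid.symm
        _ = S * (R * S) := by rw [mul_assoc]
    rw [B.X_succ' i hi]
    show S * x * S * R * (S * x * S) * R = R * (S * x * S) * R * (S * x * S)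
    simp only [mul_assoc]
    rw [hbr (x * (S * R)), hcm (S * (R * (x * (S * R)))), ← hcm (S * R),
        hbrE, hIH (R * S), hbr (x * (S * (x * (R * S)))), hcm S,
        ← hcm (S * (R * (x * S))), hbr' (x * S)]

lemma XTXE_lift : ∀ i, 1 ≤ i → i ≤ n - 1 →
    B.X i * B.T i * B.X i * B.E i = ρ • B.E i := by
  intro i hi
  induction i, hi using Nat.le_induction with
  | base => exact fun h => B.unwrapr h
  | succ i hi ih =>
    intro hle
    have hin : i ≤ n - 1 := by omega
    have IH := ih hin
    set S := B.T i with hSdef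
    set R := B.T (i + 1) with hRdef
    set x := B.X i with hxdef
    set e := B.E i with hedef
    set E' := B.E (i + 1) with hEdef
    have hbraid : S * R * S = R * S * R := B.braid i hi hle
    have hcomm : x * R = R * x := B.X_comm_T i hi (i + 1) (by omega) hle
    have hbr : ∀ z : A, S * (R * (S * z)) = R * (S * (R * z)) := by
      intro z
      calc S * (R * (S * z)) = S * R * S * z := by simp only [mul_assoc]
        _ = R * S * R * z := by rw [hbraid]
        _ = R * (S * (R * z)) := by simp only [mul_assoc]
    have hcm : ∀ z : A, x * (R * z) = R * (x * z) := by
      intro z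
      calc x * (R * z) = x * R * z := by rw [mul_assoc]
        _ = R * x * z := by rw [hcomm]
        _ = R * (x * z) := by rw [mul_assoc]
    have hTTEd : R * (S * E') = e * E' := by
      calc R * (S * E') = R * S * E' := by rw [mul_assoc]
        _ = e * E' := B.TTEdown i hi hle
    have hIHc : x * (S * (x * (e * E'))) = ρ • (e * E') := by
      calc x * (S * (x * (e * E'))) = x * S * x * e * E' := by simp only [mul_assoc]
        _ = (ρ • e) * E' := by rw [IH]
        _ = ρ • (e * E') := by rw [smul_mul_assoc]
    have hTTEu : S * (R * (e * E')) = E' := by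
      calc S * (R * (e * E')) = S * R * e * E' := by simp only [mul_assoc]
        _ = E' * e * E' := by rw [B.TTEup i hi hle]
        _ = E' := B.EEEdown i hi hle
    rw [B.X_succ' i hi]
    show S * x * S * R * (S * x * S) * E' = ρ • E'
    simp only [mul_assoc]
    rw [hbr (x * (S * E')), hcm (S * (R * (x * (S * E')))), ← hcm (S * E'),
        hTTEd, hIHc, mul_smul_comm, mul_smul_comm, hTTEu]

end CBMW

set_option maxHeartbeats 1600000 in
/-- the key commutation identity behind the fusion procedure for the
cyclotomic BMW algebra, with `c = -q⁻¹`. -/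
theorem cbmw_fusion_key_identity
    {K : Type*} [Field K] {A : Type*} [Ring A] [Algebra K A]
    {d n : ℕ} {δ : ℕ → K} {ρ q : K} {v : Fin d → K}
    (B : CBMW K A d n δ ρ q v) (hn : 2 ≤ n)
    (a u : K) (ha : a ≠ 0)
    (h1 : u * a ≠ 1) (h2 : u * a ≠ -(ρ * q)) (h3 : u ≠ a) (h4 : u + ρ * q * a ≠ 0)
    (y : A) (hy : y * B.X (n - 1) = a • y) :
    y * (algebraMap K A u - B.X n) *
        (B.T (n - 1) + ((q - q⁻¹) / (ρ⁻¹ * (-q⁻¹) * u * a - 1)) • (1 : A)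
          + ((q - q⁻¹) / (1 + q * (-q⁻¹) * u * a)) • B.E (n - 1)) *
        (((-q⁻¹) * u) • B.X (n - 1) - algebraMap K A ρ)
      = y * (((-q⁻¹) * u) • B.X n - algebraMap K A ρ) *
          (B.T (n - 1) + ((q - q⁻¹) * u / (a - u)) • (1 : A)
            + ((q - q⁻¹) * u / (u + ρ * q * a)) • B.E (n - 1)) *
          (algebraMap K A u - B.X (n - 1)) := by
  obtain ⟨k, rfl⟩ : ∃ k, n = k + 2 := ⟨n - 2, by omega⟩
  have hidx : k + 2 - 1 = k + 1 := rfl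
  rw [hidx] at hy ⊢
  -- nonzero facts
  have hq : q ≠ 0 := B.q_ne
  have hrho : ρ ≠ 0 := B.rho_ne
  have hd1 : ρ⁻¹ * (-q⁻¹) * u * a - 1 ≠ 0 := by
    intro h
    apply h2
    field_simp at h
    linear_combination -h
  have hd2 : 1 + q * (-q⁻¹) * u * a ≠ 0 := by
    intro h
    apply h1
    field_simp at h
    linear_combination -h
  have hd3 : a - u ≠ 0 := sub_ne_zero.mpr (Ne.symm h3)
  have hd4 : u + ρ * q * a ≠ 0 := h4
  have hd5 : 1 - u * a ≠ 0 := fun h => h1 (by linear_combination -h)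
  have hd6 : u * a + ρ * q ≠ 0 := fun h => h2 (by linear_combination h)
  have hz1 : -(u * q * a) - q ^ 2 * ρ ≠ 0 := by
    rw [show -(u * q * a) - q ^ 2 * ρ = -(q * (u * a + ρ * q)) by ring]
    exact neg_ne_zero.mpr (mul_ne_zero hq hd6)
  have hz2 : -(u * q ^ 2 * a) - q ^ 3 * ρ ≠ 0 := by
    rw [show -(u * q ^ 2 * a) - q ^ 3 * ρ = -(q ^ 2 * (u * a + ρ * q)) by ring]
    exact neg_ne_zero.mpr (mul_ne_zero (pow_ne_zero 2 hq) hd6)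
  have hz3 : -(u * q * a ^ 2) + q * a ≠ 0 := by
    rw [show -(u * q * a ^ 2) + q * a = q * a * (1 - u * a) by ring]
    exact mul_ne_zero (mul_ne_zero hq ha) hd5
  have hz4 : -(u * q * a) + q ≠ 0 := by
    rw [show -(u * q * a) + q = q * (1 - u * a) by ring]
    exact mul_ne_zero hq hd5
  have hz5 : u * q ^ 5 * a ^ 3 + q ^ 6 * a ^ 4 * ρ ≠ 0 := by
    rw [show u * q ^ 5 * a ^ 3 + q ^ 6 * a ^ 4 * ρ = q ^ 5 * a ^ 3 * (u + ρ * q * a) by ring]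
    exact mul_ne_zero (mul_ne_zero (pow_ne_zero 5 hq) (pow_ne_zero 3 ha)) hd4
  -- abbreviate scalars (opaque)
  obtain ⟨al, hal⟩ : ∃ x : K, x = (q - q⁻¹) / (ρ⁻¹ * (-q⁻¹) * u * a - 1) := ⟨_, rfl⟩
  obtain ⟨be, hbe⟩ : ∃ x : K, x = (q - q⁻¹) / (1 + q * (-q⁻¹) * u * a) := ⟨_, rfl⟩
  obtain ⟨al', hal'⟩ : ∃ x : K, x = (q - q⁻¹) * u / (a - u) := ⟨_, rfl⟩
  obtain ⟨be', hbe'⟩ : ∃ x : K, x = (q - q⁻¹) * u / (u + ρ * q * a) := ⟨_, rfl⟩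
  obtain ⟨c, hc⟩ : ∃ x : K, x = (-q⁻¹ : K) * u := ⟨_, rfl⟩
  rw [← hal, ← hbe, ← hal', ← hbe', ← hc]
  -- relations at index k+1
  have hk1 : 1 ≤ k + 1 := by omega
  have hk2 : k + 1 ≤ k + 2 - 1 := by omega
  set T := B.T (k + 1) with hTdef
  set E := B.E (k + 1) with hEdef
  set X := B.X (k + 1) with hXdef
  have hXn : B.X (k + 2) = T * X * T := by rw [hTdef, hXdef]; rfl
  have hTE : T * E = ρ⁻¹ • E := B.TE (k + 1) hk1 hk2
  have hTTi : T * B.Tinv (k + 1) = 1 := B.TTinv (k + 1) hk1 hk2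
  have hsk : T - B.Tinv (k + 1) = (q - q⁻¹) • (1 - E) := B.skein (k + 1) hk1 hk2
  have hTT : T * T = 1 + (q - q⁻¹) • T - ((q - q⁻¹) * ρ⁻¹) • E := by
    calc T * T = T * B.Tinv (k + 1) + T * (T - B.Tinv (k + 1)) := by noncomm_ring
      _ = 1 + T * ((q - q⁻¹) • (1 - E)) := by rw [hTTi, hsk]
      _ = 1 + (q - q⁻¹) • (T - T * E) := by rw [mul_smul_comm, mul_sub, mul_one]
      _ = 1 + (q - q⁻¹) • (T - ρ⁻¹ • E) := by rw [hTE]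
      _ = 1 + (q - q⁻¹) • T - ((q - q⁻¹) * ρ⁻¹) • E := by module
  have hXTXE : X * T * X * E = ρ • E := B.XTXE_lift (k + 1) hk1 hk2
  have hXc : X * T * X * T = T * X * T * X := B.X_braid (k + 1) hk1 hk2
  -- y-level reductions
  have hyX : y * X = a • y := hy
  have r3 : y * (T * (X * E)) = (ρ * a⁻¹) • (y * E) := by
    have hA : y * (X * (T * (X * E))) = ρ • (y * E) := by
      calc y * (X * (T * (X * E))) = y * (X * T * X * E) := by simp only [mul_assoc]
        _ = ρ • (y * E) := by rw [hXTXE, mul_smul_comm]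
    have hB : y * (X * (T * (X * E))) = a • (y * (T * (X * E))) := by
      rw [← mul_assoc, hyX, smul_mul_assoc]
    have hC : a • (y * (T * (X * E))) = ρ • (y * E) := by rw [← hB, hA]
    calc y * (T * (X * E)) = (a⁻¹ * a) • (y * (T * (X * E))) := by
          rw [inv_mul_cancel₀ ha, one_smul]
      _ = a⁻¹ • (ρ • (y * E)) := by rw [mul_smul, hC]
      _ = (ρ * a⁻¹) • (y * E) := by rw [smul_smul, mul_comm]
  have r4 : y * (T * (X * (T * X))) = a • (y * (T * (X * T))) := by
    have hA : y * (T * (X * (T * X))) = y * (X * (T * (X * T))) := by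
      calc y * (T * (X * (T * X))) = y * (T * X * T * X) := by simp only [mul_assoc]
        _ = y * (X * T * X * T) := by rw [← hXc]
        _ = y * (X * (T * (X * T))) := by simp only [mul_assoc]
    rw [hA, ← mul_assoc, hyX, smul_mul_assoc]
  have e8 : y * (T * (X * T)) * E = a⁻¹ • (y * E) := by
    have hA : y * (T * (X * T)) * E = y * (T * (X * (T * E))) := by simp only [mul_assoc]
    rw [hA, hTE]
    simp only [mul_smul_comm]
    rw [r3, smul_smul, show ρ⁻¹ * (ρ * a⁻¹) = a⁻¹ by field_simp]
  have e7 : y * (T * (X * T)) * T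
      = y * (T * X) + (q - q⁻¹) • (y * (T * (X * T))) - ((q - q⁻¹) * a⁻¹) • (y * E) := by
    have hA : y * (T * (X * T)) * T = y * (T * (X * (T * T))) := by simp only [mul_assoc]
    rw [hA, hTT]
    simp only [mul_add, mul_sub, mul_one, mul_smul_comm]
    rw [r3]
    match_scalars <;> field_simp <;> ring
  have e5 : y * (T * (X * T)) * X = a • (y * (T * (X * T))) := by
    have hA : y * (T * (X * T)) * X = y * (T * (X * (T * X))) := by simp only [mul_assoc]
    rw [hA, r4]
  -- stage 1
  have hL1 : y * (algebraMap K A u - B.X (k + 2)) = u • y - y * (T * (X * T)) := by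
    rw [mul_sub, Algebra.algebraMap_eq_smul_one, hXn]
    simp only [mul_smul_comm, mul_one, mul_assoc]
  have hR1 : y * (c • B.X (k + 2) - algebraMap K A ρ)
      = c • (y * (T * (X * T))) - ρ • y := by
    rw [mul_sub, Algebra.algebraMap_eq_smul_one, hXn]
    simp only [mul_smul_comm, mul_one, mul_assoc]
  -- stage 2
  have hL2 : (u • y - y * (T * (X * T))) * (T + al • (1 : A) + be • E)
      = (u * al) • y + u • (y * T)
        + (u * be + (q - q⁻¹) * a⁻¹ - be * a⁻¹) • (y * E)
        - y * (T * X)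
        - ((q - q⁻¹) + al) • (y * (T * (X * T))) := by
    simp only [sub_mul, mul_add, smul_mul_assoc, mul_smul_comm, mul_one]
    rw [e7, e8]
    match_scalars
    all_goals try field_simp
    all_goals try ring
    all_goals tauto
  have hR2 : (c • (y * (T * (X * T))) - ρ • y) * (T + al' • (1 : A) + be' • E)
      = (-(ρ * al')) • y - ρ • (y * T)
        + (c * (be' - (q - q⁻¹)) * a⁻¹ - ρ * be') • (y * E)
        + c • (y * (T * X))
        + (c * ((q - q⁻¹) + al')) • (y * (T * (X * T))) := by
    simp only [sub_mul, mul_add, smul_mul_assoc, mul_smul_comm, mul_one]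
    rw [e7, e8]
    match_scalars
    all_goals try field_simp
    all_goals try ring
    all_goals tauto
  have halv : al = -((q - q⁻¹) * ρ * q) / (u * a + ρ * q) := by
    rw [hal, div_eq_div_iff hd1 hd6]
    field_simp
    ring
  have hA2 : u * be + (q - q⁻¹) * a⁻¹ - be * a⁻¹ = 0 := by
    have hD : (1 + q * (-q⁻¹) * u * a) = 1 - u * a := by field_simp; try ring
    rw [hbe, hD]
    field_simp
    ring
  have hB2 : c * (be' - (q - q⁻¹)) * a⁻¹ - ρ * be' = 0 := by
    rw [hc, hbe', sub_eq_zero, div_sub' hd4, mul_div_assoc',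
      div_mul_eq_mul_div, mul_div_assoc', div_eq_div_iff hd4 hd4]
    field_simp
    ring
  have hL2' : (u • y - y * (T * (X * T))) * (T + al • (1 : A) + be • E)
      = (u * al) • y + u • (y * T) - y * (T * X)
        - ((q - q⁻¹) + al) • (y * (T * (X * T))) := by
    rw [hL2, hA2, zero_smul, add_zero]
  have hR2' : (c • (y * (T * (X * T))) - ρ • y) * (T + al' • (1 : A) + be' • E)
      = (-(ρ * al')) • y - ρ • (y * T) + c • (y * (T * X))
        + (c * ((q - q⁻¹) + al')) • (y * (T * (X * T))) := by
    rw [hR2, hB2, zero_smul, add_zero]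
  have hL3 : ((u * al) • y + u • (y * T) - y * (T * X)
        - ((q - q⁻¹) + al) • (y * (T * (X * T)))) * (c • X - algebraMap K A ρ)
      = (u * al * (c * a - ρ)) • y - (ρ * u) • (y * T) + (c * u + ρ) • (y * (T * X))
        - c • (y * (T * (X * X)))
        + (((q - q⁻¹) + al) * (ρ - c * a)) • (y * (T * (X * T))) := by
    rw [Algebra.algebraMap_eq_smul_one]
    simp only [sub_mul, add_mul, smul_mul_assoc, mul_sub, mul_smul_comm, mul_one, mul_assoc]
    rw [r4, hyX]
    match_scalars <;> ring
  have hR3 : ((-(ρ * al')) • y - ρ • (y * T) + c • (y * (T * X))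
        + (c * ((q - q⁻¹) + al')) • (y * (T * (X * T)))) * (algebraMap K A u - X)
      = (ρ * al' * (a - u)) • y - (ρ * u) • (y * T) + (c * u + ρ) • (y * (T * X))
        - c • (y * (T * (X * X)))
        + (c * ((q - q⁻¹) + al') * (u - a)) • (y * (T * (X * T))) := by
    rw [Algebra.algebraMap_eq_smul_one]
    simp only [sub_mul, add_mul, smul_mul_assoc, mul_sub, mul_smul_comm, mul_one, mul_assoc]
    rw [r4, hyX]
    match_scalars <;> ring
  have hd7 : q * ρ + u * a ≠ 0 := by rw [add_comm, mul_comm q ρ]; exact hd6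
  have hd8 : u * a + q * ρ ≠ 0 := by rw [mul_comm q ρ]; exact hd6
  rw [hL1, hR1, hL2', hR2', hL3, hR3]
  match_scalars
  all_goals try simp only [halv, hal', hc]
  all_goals try field_simp
  all_goals ring
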